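/- Let n, m and m' be nonnegative integers such that n+m and n+m' are both odd and m ≥ m'. Then the partisan chocolate game position PC(n,m) is less than or equal to PC(n,m') in the normal-play game order. -/

import Mathlib

universe u

namespace SetTheory

/-- Pre-games, as `SetTheory.PGame` was defined in Mathlib (removed from current Mathlib). -/
inductive PGame : Type (u + 1)
  | mk : ∀ α β : Type u, (α → PGame) → (β → PGame) → PGame

namespace PGame

/-- The pair (`≤`, `⧏`) of the old Mathlib definition `SetTheory.PGame.le_lf`. -/
noncomputable def leLF (x : PGame.{u}) : PGame.{u} → Prop × Prop :=
  x.rec (motive := fun _ => PGame.{u} → Prop × Prop) fun _ _ _ _ ihL ihR y =>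
    y.rec (motive := fun _ => Prop × Prop) fun yl yr yL yR jhL jhR =>
      ((∀ i, (ihL i (mk yl yr yL yR)).2) ∧ ∀ j, (jhR j).2,
        (∃ i, (jhL i).1) ∨ ∃ j, (ihR j (mk yl yr yL yR)).1)

noncomputable instance : LE PGame.{u} :=
  ⟨fun x y => (leLF x y).1⟩

end PGame

end SetTheory

open SetTheory

/-- The partisan chocolate game position `PC n m`.
Left options: `PC n' m` with `n' < n` and `n' + m` even, and `PC n m'` with `m' < m` and
`n + m'` even. Right options: the same with "odd" in place of "even". -/
def PC : ℕ → ℕ → SetTheory.PGame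
  | n, m =>
    SetTheory.PGame.mk
      {p : ℕ × ℕ // (p.2 = m ∧ p.1 < n ∧ Even (p.1 + m)) ∨ (p.1 = n ∧ p.2 < m ∧ Even (n + p.2))}
      {p : ℕ × ℕ // (p.2 = m ∧ p.1 < n ∧ Odd (p.1 + m)) ∨ (p.1 = n ∧ p.2 < m ∧ Odd (n + p.2))}
      (fun p => PC p.1.1 p.1.2)
      (fun p => PC p.1.1 p.1.2)
termination_by n m => n + m
decreasing_by
  all_goals rcases p.2 with ⟨h1, h2, -⟩ | ⟨h1, h2, -⟩ <;> omega

namespace SetTheory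

namespace PGame

def LF (x y : PGame.{u}) : Prop := (leLF x y).2

infix:50 " ⧏ " => SetTheory.PGame.LF

theorem leLF_fst (xl xr : Type u) (xL : xl → PGame.{u}) (xR : xr → PGame.{u})
    (yl yr : Type u) (yL : yl → PGame.{u}) (yR : yr → PGame.{u}) :
    (leLF (mk xl xr xL xR) (mk yl yr yL yR)).1 =
      ((∀ i, (leLF (xL i) (mk yl yr yL yR)).2) ∧ ∀ j, (leLF (mk xl xr xL xR) (yR j)).2) := rfl

theorem leLF_snd (xl xr : Type u) (xL : xl → PGame.{u}) (xR : xr → PGame.{u})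
    (yl yr : Type u) (yL : yl → PGame.{u}) (yR : yr → PGame.{u}) :
    (leLF (mk xl xr xL xR) (mk yl yr yL yR)).2 =
      ((∃ i, (leLF (mk xl xr xL xR) (yL i)).1) ∨ ∃ j, (leLF (xR j) (mk yl yr yL yR)).1) := rfl

theorem not_le_aux (x : PGame.{u}) : ∀ y : PGame.{u},
    (¬ (leLF x y).1 ↔ (leLF y x).2) ∧ (¬ (leLF y x).1 ↔ (leLF x y).2) := by
  induction x with
  | mk xl xr xL xR ihL ihR =>
    intro y
    induction y with
    | mk yl yr yL yR jhL jhR =>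
      have A : ∀ i, (leLF (xL i) (mk yl yr yL yR)).2 ↔ ¬ (leLF (mk yl yr yL yR) (xL i)).1 :=
        fun i => ((ihL i _).2).symm
      have B : ∀ j, (leLF (mk xl xr xL xR) (yR j)).2 ↔ ¬ (leLF (yR j) (mk xl xr xL xR)).1 :=
        fun j => ((jhR j).2).symm
      have C : ∀ i, (leLF (yL i) (mk xl xr xL xR)).2 ↔ ¬ (leLF (mk xl xr xL xR) (yL i)).1 :=
        fun i => ((jhL i).1).symm
      have D : ∀ j, (leLF (mk yl yr yL yR) (xR j)).2 ↔ ¬ (leLF (xR j) (mk yl yr yL yR)).1 :=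
        fun j => ((ihR j _).1).symm
      rw [leLF_fst, leLF_snd, leLF_fst, leLF_snd]
      simp only [A, B, C, D, not_and_or, not_forall, not_not, and_self]

theorem not_le {x y : PGame.{u}} : ¬ x ≤ y ↔ y ⧏ x := (not_le_aux x y).1

theorem mk_le_mk {xl xr : Type u} {xL : xl → PGame.{u}} {xR : xr → PGame.{u}}
    {yl yr : Type u} {yL : yl → PGame.{u}} {yR : yr → PGame.{u}} :
    mk xl xr xL xR ≤ mk yl yr yL yR ↔
      (∀ i, xL i ⧏ mk yl yr yL yR) ∧ ∀ j, mk xl xr xL xR ⧏ yR j := Iff.rfl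

end PGame

end SetTheory

open SetTheory PGame

def LOpt (n m a b : ℕ) : Prop := (b = m ∧ a < n ∧ Even (a + m)) ∨ (a = n ∧ b < m ∧ Even (n + b))
def ROpt (n m a b : ℕ) : Prop := (b = m ∧ a < n ∧ Odd (a + m)) ∨ (a = n ∧ b < m ∧ Odd (n + b))

def Phi (n m p q : ℕ) : Prop :=
  ((n+m) % 2 = 1 ∧ (p+q) % 2 = 1 ∧ p+q ≤ n+m) ∨
  ((n+m) % 2 = 0 ∧ (p+q) % 2 = 1) ∨
  ((n+m) % 2 = 0 ∧ (p+q) % 2 = 0 ∧ n+m-2*(min n m % 2) ≤ p+q-2*(min p q % 2))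

lemma PC_eq (n m : ℕ) : PC n m =
    SetTheory.PGame.mk
      {p : ℕ × ℕ // LOpt n m p.1 p.2}
      {p : ℕ × ℕ // ROpt n m p.1 p.2}
      (fun p => PC p.1.1 p.1.2)
      (fun p => PC p.1.1 p.1.2) := by
  conv_lhs => rw [PC]
  rfl

lemma PC_le_iff (n m p q : ℕ) :
    PC n m ≤ PC p q ↔
      (∀ a b, LOpt n m a b → PC a b ⧏ PC p q) ∧
      (∀ a b, ROpt p q a b → PC n m ⧏ PC a b) := by
  conv_lhs => rw [PC_eq n m, PC_eq p q, PGame.mk_le_mk]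
  rw [← PC_eq n m, ← PC_eq p q]
  constructor
  · rintro ⟨h1, h2⟩
    exact ⟨fun a b hab => h1 ⟨(a,b), hab⟩, fun a b hab => h2 ⟨(a,b), hab⟩⟩
  · rintro ⟨h1, h2⟩
    exact ⟨fun i => h1 i.1.1 i.1.2 i.2, fun j => h2 j.1.1 j.1.2 j.2⟩

set_option maxHeartbeats 2000000 in
theorem key (n m p q : ℕ) : PC n m ≤ PC p q ↔ Phi n m p q := by
  rw [PC_le_iff]
  constructor
  · rintro ⟨hL, hR⟩
    by_contra hPhi
    -- split into the three failing cases
    rcases Nat.even_or_odd (n+m) with hs | hs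
    · rcases Nat.even_or_odd (p+q) with ht | ht
      · -- even even, must have I1 > I2
        have hs' := Nat.even_iff.1 hs
        have ht' := Nat.even_iff.1 ht
        have hI : p+q-2*(min p q % 2) < n+m-2*(min n m % 2) := by
          simp only [Phi] at hPhi; omega
        obtain ⟨a, b, hab, hI'⟩ : ∃ a b, LOpt n m a b ∧
            (a+b) % 2 = 0 ∧ p+q-2*(min p q % 2) ≤ a+b-2*(min a b % 2) := by
          rcases Nat.even_or_odd n with hn | hn
          · -- n, m both even
            have hn' := Nat.even_iff.1 hn
            rcases le_or_gt 2 m with hm2 | hm2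
            · exact ⟨n, m-2, Or.inr ⟨rfl, by omega, by rw [Nat.even_iff]; omega⟩, by omega, by omega⟩
            · rcases le_or_gt 2 n with hn2 | hn2
              · exact ⟨n-2, m, Or.inl ⟨rfl, by omega, by rw [Nat.even_iff]; omega⟩, by omega, by omega⟩
              · exfalso; omega
          · -- n, m both odd
            have hn' := Nat.odd_iff.1 hn
            rcases le_or_gt 3 n with hn3 | hn3
            · exact ⟨n-2, m, Or.inl ⟨rfl, by omega, by rw [Nat.even_iff]; omega⟩, by omega, by omega⟩
            · rcases le_or_gt 3 m with hm3 | hm3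
              · exact ⟨n, m-2, Or.inr ⟨rfl, by omega, by rw [Nat.even_iff]; omega⟩, by omega, by omega⟩
              · exfalso; omega
        have h1 := PGame.not_le.2 (hL a b hab)
        exact h1 ((key p q a b).2 (by simp only [Phi, Nat.even_iff] at ht ⊢; omega))
      · -- even odd: Phi holds, contradiction
        exact hPhi (Or.inr (Or.inl ⟨Nat.even_iff.1 hs, Nat.odd_iff.1 ht⟩))
    · rcases Nat.even_or_odd (p+q) with ht | ht
      · -- s odd, t even
        have hs' := Nat.odd_iff.1 hs
        have ht' := Nat.even_iff.1 ht
        rcases le_or_gt (n+m) (p+q) with hc | hc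
        · -- t ≥ s+1 : use right option of (p,q), sum t-1
          obtain ⟨a, b, hab, hs1⟩ : ∃ a b, ROpt p q a b ∧ a+b = p+q-1 := by
            rcases Nat.eq_zero_or_pos p with hp | hp
            · refine ⟨p, q-1, Or.inr ⟨rfl, by omega, ?_⟩, by omega⟩
              · rw [Nat.odd_iff]; have := Nat.even_iff.1 ht; have := Nat.odd_iff.1 hs; omega
            · refine ⟨p-1, q, Or.inl ⟨rfl, by omega, ?_⟩, by omega⟩
              · rw [Nat.odd_iff]; have := Nat.even_iff.1 ht; omega
          have h1 := PGame.not_le.2 (hR a b hab)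
          refine h1 ((key a b n m).2 ?_)
          have := Nat.even_iff.1 ht; have := Nat.odd_iff.1 hs
          simp only [Phi]; omega
        · -- t ≤ s-1 : use left option of (n,m) with min even, I = s-1
          obtain ⟨a, b, hab, hI'⟩ : ∃ a b, LOpt n m a b ∧ a+b-2*(min a b % 2) = n+m-1 := by
            rcases Nat.even_or_odd n with hn | hn
            · -- n even, m odd
              have := Nat.even_iff.1 hn; have := Nat.odd_iff.1 hs
              exact ⟨n, m-1, Or.inr ⟨rfl, by omega, by rw [Nat.even_iff]; omega⟩, by omega⟩
            · have := Nat.odd_iff.1 hn; have := Nat.odd_iff.1 hs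
              exact ⟨n-1, m, Or.inl ⟨rfl, by omega, by rw [Nat.even_iff]; omega⟩, by omega⟩
          have h1 := PGame.not_le.2 (hL a b hab)
          refine h1 ((key p q a b).2 ?_)
          have := Nat.even_iff.1 ht; have := Nat.odd_iff.1 hs
          have hab2 : (a+b) % 2 = 0 := by
            rcases hab with ⟨h1', h2', h3'⟩ | ⟨h1', h2', h3'⟩ <;>
              (have := Nat.even_iff.1 h3'; omega)
          simp only [Phi]; omega
      · -- s odd, t odd, must have t > s
        have hs' := Nat.odd_iff.1 hs
        have ht' := Nat.odd_iff.1 ht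
        have hst : n+m < p+q := by
          simp only [Phi] at hPhi; omega
        obtain ⟨a, b, hab, hs1⟩ : ∃ a b, ROpt p q a b ∧ a+b = p+q-2 := by
          have := Nat.odd_iff.1 ht; have := Nat.odd_iff.1 hs
          rcases le_or_gt 2 q with hq | hq
          · exact ⟨p, q-2, Or.inr ⟨rfl, by omega, by rw [Nat.odd_iff]; omega⟩, by omega⟩
          · refine ⟨p-2, q, Or.inl ⟨rfl, by omega, by rw [Nat.odd_iff]; omega⟩, by omega⟩
        have h1 := PGame.not_le.2 (hR a b hab)
        refine h1 ((key a b n m).2 ?_)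
        have := Nat.odd_iff.1 ht; have := Nat.odd_iff.1 hs
        simp only [Phi]; omega
  · intro hPhi
    refine ⟨?_, ?_⟩
    · rintro a b hab
      rw [← PGame.not_le, key p q a b]
      rcases hab with ⟨h1', h2', h3'⟩ | ⟨h1', h2', h3'⟩ <;>
        (have := Nat.even_iff.1 h3'; simp only [Phi] at hPhi ⊢; omega)
    · rintro a b hab
      rw [← PGame.not_le, key a b n m]
      rcases hab with ⟨h1', h2', h3'⟩ | ⟨h1', h2', h3'⟩ <;>
        (have := Nat.odd_iff.1 h3'; simp only [Phi] at hPhi ⊢; omega)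
termination_by n+m+p+q
decreasing_by all_goals first
  | (rcases hab with ⟨h1', h2', -⟩ | ⟨h1', h2', -⟩ <;> omega)
  | omega

theorem stmt_2 (n m m' : ℕ) (hm : Odd (n + m)) (hm' : Odd (n + m')) (h : m' ≤ m) :
    PC n m ≤ PC n m' := by
  rw [key]
  have := Nat.odd_iff.1 hm; have := Nat.odd_iff.1 hm'
  simp only [Phi]; omega
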